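/- arXiv:1708.02093 — 4 statements merged into one kernel-verified Lean document; each statement's English description precedes it below -/
import Mathlib

section
/- In the group G = ⟨a, b | a³, b³, (ab)³, (ab⁻¹)³⟩, the commutator [a,b] is central. -/
open FreeGroup

section Aux
variable {G : Type*} [Group G] (a b : G)

lemma comm_with_a (ha : a ^ 3 = 1) (hb : b ^ 3 = 1)
    (hab : (a * b) ^ 3 = 1) (hab' : (a * b⁻¹) ^ 3 = 1) :
    a * (a⁻¹ * b⁻¹ * a * b) = (a⁻¹ * b⁻¹ * a * b) * a := by
  have sb : b⁻¹ * b⁻¹ = b := by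
    have h : b⁻¹ * b⁻¹ = b⁻¹ * b⁻¹ * b ^ 3 := by rw [hb, mul_one]
    rw [h]; group
  have h1 : a * b * (a * b) * (a * b) = 1 := by
    rw [← hab, pow_succ, pow_succ, pow_one]
  have e1' : a * b * a = b⁻¹ * a⁻¹ * b⁻¹ := by
    have h : a * b * a = a * b * (a * b) * (a * b) * (b⁻¹ * a⁻¹ * b⁻¹) := by group
    rw [h1, one_mul] at h
    exact h
  have h2 : a * b⁻¹ * (a * b⁻¹) * (a * b⁻¹) = 1 := by
    rw [← hab', pow_succ, pow_succ, pow_one]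
  have e2 : b⁻¹ * a * b⁻¹ = a⁻¹ * b * a⁻¹ := by
    have h : b⁻¹ * a * b⁻¹ =
        a⁻¹ * (a * b⁻¹ * (a * b⁻¹) * (a * b⁻¹)) * b * a⁻¹ := by group
    rw [h2, mul_one] at h
    exact h
  calc a * (a⁻¹ * b⁻¹ * a * b) = b⁻¹ * a * b := by group
    _ = b⁻¹ * a * (b⁻¹ * b⁻¹) := by rw [sb]
    _ = (b⁻¹ * a * b⁻¹) * b⁻¹ := by group
    _ = (a⁻¹ * b * a⁻¹) * b⁻¹ := by rw [e2]
    _ = a⁻¹ * b * a⁻¹ * b⁻¹ := by group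
    _ = a⁻¹ * (b⁻¹ * b⁻¹) * a⁻¹ * b⁻¹ := by rw [sb]
    _ = a⁻¹ * b⁻¹ * (b⁻¹ * a⁻¹ * b⁻¹) := by group
    _ = a⁻¹ * b⁻¹ * (a * b * a) := by rw [e1']
    _ = (a⁻¹ * b⁻¹ * a * b) * a := by group

lemma comm_with_b (ha : a ^ 3 = 1) (hb : b ^ 3 = 1)
    (hab : (a * b) ^ 3 = 1) (hab' : (a * b⁻¹) ^ 3 = 1) :
    b * (a⁻¹ * b⁻¹ * a * b) = (a⁻¹ * b⁻¹ * a * b) * b := by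
  have hba : (b * a) ^ 3 = 1 := by
    have h : (b * a) ^ 3 = b * (a * b) ^ 3 * b⁻¹ := by
      rw [pow_succ, pow_succ, pow_one, pow_succ, pow_succ, pow_one]
      group
    rw [h, hab]; group
  have hba' : (b * a⁻¹) ^ 3 = 1 := by
    have h : (b * a⁻¹) ^ 3 = (((a * b⁻¹) ^ 3)⁻¹ : G) := by
      rw [pow_succ, pow_succ, pow_one, pow_succ, pow_succ, pow_one]
      group
    rw [h, hab', inv_one]
  have key := comm_with_a b a hb ha hba hba'
  have hc : (b⁻¹ * a⁻¹ * b * a) = (a⁻¹ * b⁻¹ * a * b)⁻¹ := by group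
  rw [hc] at key
  have := congrArg (fun x => (a⁻¹ * b⁻¹ * a * b) * x * (a⁻¹ * b⁻¹ * a * b)) key
  simpa [mul_assoc] using this.symm

end Aux


open FreeGroup

/-- In `G = ⟨a, b | a³, b³, (ab)³, (ab⁻¹)³⟩`, the commutator `[a,b] = a⁻¹b⁻¹ab`
is central. -/
theorem stmt_1 :
    letI N : Subgroup (FreeGroup (Fin 2)) := Subgroup.normalClosure
      {(of 0 : FreeGroup (Fin 2)) ^ 3, (of 1 : FreeGroup (Fin 2)) ^ 3,
        (of 0 * of 1 : FreeGroup (Fin 2)) ^ 3,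
        (of 0 * (of 1)⁻¹ : FreeGroup (Fin 2)) ^ 3}
    (QuotientGroup.mk (of 0 : FreeGroup (Fin 2)) : FreeGroup (Fin 2) ⧸ N)⁻¹ *
        (QuotientGroup.mk (of 1))⁻¹ * QuotientGroup.mk (of 0) * QuotientGroup.mk (of 1) ∈
      Subgroup.center (FreeGroup (Fin 2) ⧸ N) := by
  set N : Subgroup (FreeGroup (Fin 2)) := Subgroup.normalClosure
      {(of 0 : FreeGroup (Fin 2)) ^ 3, (of 1 : FreeGroup (Fin 2)) ^ 3,
        (of 0 * of 1 : FreeGroup (Fin 2)) ^ 3,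
        (of 0 * (of 1)⁻¹ : FreeGroup (Fin 2)) ^ 3} with hN
  set A : FreeGroup (Fin 2) ⧸ N := QuotientGroup.mk (of 0) with hA_def
  set B : FreeGroup (Fin 2) ⧸ N := QuotientGroup.mk (of 1) with hB_def
  have mem_of : ∀ x : FreeGroup (Fin 2),
      x ∈ ({(of 0 : FreeGroup (Fin 2)) ^ 3, (of 1 : FreeGroup (Fin 2)) ^ 3,
        (of 0 * of 1 : FreeGroup (Fin 2)) ^ 3,
        (of 0 * (of 1)⁻¹ : FreeGroup (Fin 2)) ^ 3} : Set (FreeGroup (Fin 2))) →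
      (QuotientGroup.mk x : FreeGroup (Fin 2) ⧸ N) = 1 := fun x hx => by
    rw [QuotientGroup.eq_one_iff]
    exact Subgroup.subset_normalClosure hx
  have relA : A ^ 3 = 1 := by
    rw [hA_def, ← QuotientGroup.mk_pow]
    exact mem_of _ (by simp)
  have relB : B ^ 3 = 1 := by
    rw [hB_def, ← QuotientGroup.mk_pow]
    exact mem_of _ (by simp)
  have relAB : (A * B) ^ 3 = 1 := by
    rw [hA_def, hB_def, ← QuotientGroup.mk_mul, ← QuotientGroup.mk_pow]
    exact mem_of _ (by simp)
  have relAB' : (A * B⁻¹) ^ 3 = 1 := by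
    rw [hA_def, hB_def, ← QuotientGroup.mk_inv, ← QuotientGroup.mk_mul,
      ← QuotientGroup.mk_pow]
    exact mem_of _ (by simp)
  have ca := comm_with_a A B relA relB relAB relAB'
  have cb := comm_with_b A B relA relB relAB relAB'
  rw [Subgroup.mem_center_iff]
  intro g
  obtain ⟨x, rfl⟩ := QuotientGroup.mk_surjective g
  induction x using FreeGroup.induction_on with
  | C1 => simp
  | of i =>
      fin_cases i
      · exact ca
      · exact cb
  | inv_of i h =>
      exact (Commute.inv_left (h : Commute _ _))
  | mul x y hx hy =>
      rw [QuotientGroup.mk_mul]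
      exact Commute.mul_left (hx : Commute _ _) (hy : Commute _ _)
end

section
/- In the group G = ⟨a, b | a³, b³, (ab)³, (ab⁻¹)³⟩, the identity [a, [a,b]] = 1 holds. -/
open FreeGroup

lemma aux_comm {G : Type*} [Group G] (A B : G) (hB : B ^ 3 = 1)
    (hAB : (A * B) ^ 3 = 1) (hAB' : (A * B⁻¹) ^ 3 = 1) :
    A⁻¹ * (A⁻¹ * B⁻¹ * A * B)⁻¹ * A * (A⁻¹ * B⁻¹ * A * B) = 1 := by
  rw [pow_succ, pow_succ, pow_one] at hAB hAB' hB
  have e1 : (A * B * A) * (B * A * B) = 1 := by rw [← hAB]; group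
  have e2 : (A * B⁻¹ * A) * (B⁻¹ * A * B⁻¹) = 1 := by rw [← hAB']; group
  have h1 : A * B * A = (B * A * B)⁻¹ := eq_inv_of_mul_eq_one_left e1
  have h2 : A * B⁻¹ * A = (B⁻¹ * A * B⁻¹)⁻¹ := eq_inv_of_mul_eq_one_left e2
  have key : A * B⁻¹ * A * B = B⁻¹ * (A * B * A) := by
    calc A * B⁻¹ * A * B = (A * B⁻¹ * A) * B := by group
      _ = (B⁻¹ * A * B⁻¹)⁻¹ * B := by rw [h2]
      _ = B * A⁻¹ * B⁻¹ * (B * B * B) := by group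
      _ = B * A⁻¹ * B⁻¹ := by rw [hB]; group
      _ = B⁻¹ * B⁻¹ * (B * B * B) * A⁻¹ * B⁻¹ := by group
      _ = B⁻¹ * B⁻¹ * A⁻¹ * B⁻¹ := by rw [hB]; group
      _ = B⁻¹ * (B * A * B)⁻¹ := by group
      _ = B⁻¹ * (A * B * A) := by rw [h1]
  calc A⁻¹ * (A⁻¹ * B⁻¹ * A * B)⁻¹ * A * (A⁻¹ * B⁻¹ * A * B)
      = (B⁻¹ * (A * B * A))⁻¹ * (A * B⁻¹ * A * B) := by group
    _ = (A * B⁻¹ * A * B)⁻¹ * (A * B⁻¹ * A * B) := by rw [key]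
    _ = 1 := by group

/-- In `G = ⟨a, b | a³, b³, (ab)³, (ab⁻¹)³⟩`, the identity `[a, [a,b]] = 1`
holds, where `[x,y] = x⁻¹y⁻¹xy`. -/
theorem stmt_3 :
    letI N : Subgroup (FreeGroup (Fin 2)) := Subgroup.normalClosure
      {(of 0 : FreeGroup (Fin 2)) ^ 3, (of 1 : FreeGroup (Fin 2)) ^ 3,
        (of 0 * of 1 : FreeGroup (Fin 2)) ^ 3,
        (of 0 * (of 1)⁻¹ : FreeGroup (Fin 2)) ^ 3}
    letI A : FreeGroup (Fin 2) ⧸ N := QuotientGroup.mk (of 0)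
    letI B : FreeGroup (Fin 2) ⧸ N := QuotientGroup.mk (of 1)
    letI C := A⁻¹ * B⁻¹ * A * B
    A⁻¹ * C⁻¹ * A * C = 1 := by
  set N : Subgroup (FreeGroup (Fin 2)) := Subgroup.normalClosure
      {(of 0 : FreeGroup (Fin 2)) ^ 3, (of 1 : FreeGroup (Fin 2)) ^ 3,
        (of 0 * of 1 : FreeGroup (Fin 2)) ^ 3,
        (of 0 * (of 1)⁻¹ : FreeGroup (Fin 2)) ^ 3} with hN
  have mem : ∀ x ∈ ({(of 0 : FreeGroup (Fin 2)) ^ 3, (of 1 : FreeGroup (Fin 2)) ^ 3,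
        (of 0 * of 1 : FreeGroup (Fin 2)) ^ 3,
        (of 0 * (of 1)⁻¹ : FreeGroup (Fin 2)) ^ 3} : Set (FreeGroup (Fin 2))),
      (QuotientGroup.mk x : FreeGroup (Fin 2) ⧸ N) = 1 := by
    intro x hx
    rw [QuotientGroup.eq_one_iff]
    exact Subgroup.subset_normalClosure hx
  have hB : ((QuotientGroup.mk (of 1) : FreeGroup (Fin 2) ⧸ N)) ^ 3 = 1 := by
    rw [← QuotientGroup.mk_pow]
    exact mem _ (by simp)
  have hAB : ((QuotientGroup.mk (of 0) : FreeGroup (Fin 2) ⧸ N) *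
      QuotientGroup.mk (of 1)) ^ 3 = 1 := by
    rw [← QuotientGroup.mk_mul, ← QuotientGroup.mk_pow]
    exact mem _ (by simp)
  have hAB' : ((QuotientGroup.mk (of 0) : FreeGroup (Fin 2) ⧸ N) *
      (QuotientGroup.mk (of 1))⁻¹) ^ 3 = 1 := by
    rw [← QuotientGroup.mk_inv, ← QuotientGroup.mk_mul, ← QuotientGroup.mk_pow]
    exact mem _ (by simp)
  exact aux_comm _ _ hB hAB hAB'
end

section
/- For odd k ≥ 3, the additive subgroup of the k×k matrices over ℤ[ω] (ω = e^{2πi/k}) generated by the image of ρ_k has finite index: it contains k·ω^n·E_{i,j} for all i, j ∈ {1,…,k} and n ∈ {0,…,k-1}, where E_{i,j} is the matrix unit. -/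
open Matrix
open Fin.NatCast
open Fin.CommRing

/-- `ρ_k(a) = diag(1, ω, …, ω^{k-1})` where `ω = e^{2πi/k}`. -/
noncomputable def rhoA (k : ℕ) : Matrix (Fin k) (Fin k) ℂ :=
  diagonal fun i => Complex.exp (2 * Real.pi * Complex.I / k) ^ (i : ℕ)

/-- `ρ_k(b)`, the cyclic permutation matrix with `(i,j)` entry `1` iff `j ≡ i+1 (mod k)`. -/
def rhoB (k : ℕ) : Matrix (Fin k) (Fin k) ℂ :=
  Matrix.of fun i j => if (j : ℕ) % k = ((i : ℕ) + 1) % k then 1 else 0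

namespace Stmt13Aux

noncomputable def om (k : ℕ) : ℂ := Complex.exp (2 * Real.pi * Complex.I / k)

variable {k : ℕ} [NeZero k]

lemma powA (t : ℕ) : rhoA k ^ t = diagonal (fun p : Fin k => om k ^ ((p : ℕ) * t)) := by
  have h : ((fun i : Fin k => om k ^ (i : ℕ)) ^ t) = fun p : Fin k => om k ^ ((p : ℕ) * t) := by
    funext p; simp [pow_mul]
  rw [show rhoA k = diagonal (fun i : Fin k => om k ^ (i : ℕ)) from rfl,
    Matrix.diagonal_pow, h]

lemma rhoB_eq (hk : 3 ≤ k) :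
    rhoB k = Matrix.of fun p q : Fin k => if q = p + 1 then 1 else 0 := by
  funext p q
  simp only [rhoB, of_apply]
  congr 1
  rw [eq_iff_iff, Fin.ext_iff, Fin.val_add]
  have h1 : (1 : Fin k).val = 1 := by
    have h2 : (1:ℕ) % k = 1 := Nat.mod_eq_of_lt (by omega)
    simp [Fin.val_one', h2]
  rw [h1, Nat.mod_eq_of_lt q.isLt]

lemma powB (hk : 3 ≤ k) (t : ℕ) :
    rhoB k ^ t = Matrix.of fun p q : Fin k => if q = p + (t : Fin k) then 1 else 0 := by
  induction t with
  | zero => funext p q; simp [Matrix.one_apply, eq_comm]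
  | succ t ih =>
    rw [pow_succ, ih, rhoB_eq hk]
    funext p q
    simp only [mul_apply, of_apply, ite_mul, one_mul, zero_mul]
    rw [Finset.sum_ite_eq' Finset.univ (p + (t : Fin k))]
    simp [add_assoc]

lemma shiftL (hk : 3 ≤ k) (t : ℕ) (M : Matrix (Fin k) (Fin k) ℂ) (p q : Fin k) :
    (rhoB k ^ t * M) p q = M (p + (t : Fin k)) q := by
  rw [powB hk, mul_apply]
  simp only [of_apply, ite_mul, one_mul, zero_mul]
  rw [Finset.sum_ite_eq' Finset.univ (p + (t : Fin k))]
  simp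

lemma scaleL (t : ℕ) (M : Matrix (Fin k) (Fin k) ℂ) (p q : Fin k) :
    (rhoA k ^ t * M) p q = om k ^ ((p : ℕ) * t) * M p q := by
  rw [powA, Matrix.diagonal_mul]

lemma geom (hk : 3 ≤ k) (c : ℕ) :
    ∑ m ∈ Finset.range k, om k ^ (c * m) = if k ∣ c then (k : ℂ) else 0 := by
  have hk0 : k ≠ 0 := by omega
  have hprim : IsPrimitiveRoot (om k) k := Complex.isPrimitiveRoot_exp k hk0
  simp_rw [pow_mul]
  by_cases h : k ∣ c
  · have h1 : om k ^ c = 1 := (hprim.pow_eq_one_iff_dvd c).mpr h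
    simp [h1, h]
  · have hne : om k ^ c ≠ 1 := fun hh => h ((hprim.pow_eq_one_iff_dvd c).mp hh)
    rw [geom_sum_eq hne]
    have h1 : (om k ^ c) ^ k = 1 := by
      rw [← pow_mul, mul_comm, pow_mul, hprim.pow_eq_one, one_pow]
    simp [h1, h]

end Stmt13Aux

open Stmt13Aux

/-- For odd `k ≥ 3`, the additive subgroup of `k×k` matrices generated by the image of
`ρ_k` contains `k·ωⁿ·E_{i,j}` for all indices `i, j` and all `0 ≤ n ≤ k-1`, where
`E_{i,j}` is the matrix unit (hence it has finite index in the matrices over `ℤ[ω]`). -/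
theorem stmt_13 (k : ℕ) (hk : 3 ≤ k) (hodd : Odd k) (i j : Fin k) (n : ℕ) (hn : n ≤ k - 1) :
    Matrix.single i j ((k : ℂ) * Complex.exp (2 * Real.pi * Complex.I / k) ^ n) ∈
      AddSubgroup.closure
        ((Submonoid.closure {rhoA k, rhoB k} : Submonoid (Matrix (Fin k) (Fin k) ℂ)) :
          Set (Matrix (Fin k) (Fin k) ℂ)) := by
  haveI : NeZero k := ⟨by omega⟩
  have homega : Complex.exp (2 * Real.pi * Complex.I / k) = om k := rfl
  rw [homega]
  set a : ℕ := k + 1 - (i : ℕ) with ha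
  set b : ℕ := k - 1 with hb
  -- Fin facts
  have haF : ((a : ℕ) : Fin k) = 1 - i := by
    have h1 : ((a : ℕ) : Fin k) + i = 1 := by
      rw [← Fin.cast_val_eq_self i, ← Nat.cast_add,
        show a + (i : ℕ) = k + 1 by have := i.isLt; omega,
        Nat.cast_add, Fin.natCast_self, zero_add, Nat.cast_one]
    exact eq_sub_of_add_eq h1
  have hbF : ((b : ℕ) : Fin k) = -1 := by
    have h1 : ((b : ℕ) : Fin k) + 1 = 0 := by
      rw [show (1 : Fin k) = ((1 : ℕ) : Fin k) by simp, ← Nat.cast_add,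
        show b + 1 = k by omega, Fin.natCast_self]
    exact eq_neg_of_add_eq_zero_left h1
  have hval1 : (1 : Fin k).val = 1 := by
    have h2 : (1 : ℕ) % k = 1 := Nat.mod_eq_of_lt (by omega)
    simp [Fin.val_one', h2]
  have hcop : Nat.Coprime k 2 := hodd.coprime_two_right
  have key : Matrix.single i j ((k : ℂ) * om k ^ n)
      = ∑ m ∈ Finset.range k,
          rhoB k ^ a * (rhoA k ^ n * (rhoB k ^ b * (rhoA k ^ (2 * m) * rhoB k ^ (j : ℕ)))) := by
    funext p q
    rw [Matrix.sum_apply]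
    simp_rw [shiftL hk, scaleL, shiftL hk, scaleL, powB hk]
    simp only [Matrix.of_apply]
    set P : Fin k := p + ((a : ℕ) : Fin k) with hP
    set R : Fin k := P + ((b : ℕ) : Fin k) with hR
    have hterm : ∀ m ∈ Finset.range k,
        om k ^ ((P : ℕ) * n) * (om k ^ ((R : ℕ) * (2 * m))
            * (if q = R + ((j : ℕ) : Fin k) then (1:ℂ) else 0))
        = (om k ^ ((P : ℕ) * n) * (if q = R + ((j : ℕ) : Fin k) then (1:ℂ) else 0))
            * om k ^ (((R : ℕ) * 2) * m) := by
      intro m _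
      rw [show (R : ℕ) * (2 * m) = ((R : ℕ) * 2) * m by ring]
      ring
    rw [Finset.sum_congr rfl hterm, ← Finset.mul_sum, geom hk]
    have hRsub : R = p - i := by rw [hR, hP, haF, hbF]; ring
    by_cases hp : p = i
    · subst hp
      have hR0 : R = 0 := by rw [hRsub, sub_self]
      have hP1 : P = 1 := by rw [hP, haF]; ring
      have hRj : R + ((j : ℕ) : Fin k) = j := by
        rw [hR0, zero_add, Fin.cast_val_eq_self]
      have hdvd : k ∣ (R : ℕ) * 2 := by rw [hR0]; simp
      rw [hRj, hP1, hval1, one_mul, if_pos hdvd]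
      by_cases hq : q = j
      · subst hq
        rw [if_pos rfl, Matrix.single_apply_same]
        ring
      · rw [if_neg hq]
        exact (Matrix.single_apply_of_ne _ _ _ _ _ (by tauto)).trans (by ring)
    · have hR0 : R ≠ 0 := by rw [hRsub]; exact sub_ne_zero.mpr hp
      have hRv : (R : ℕ) ≠ 0 := fun h => hR0 (Fin.ext h)
      have hndvd : ¬ k ∣ (R : ℕ) * 2 := by
        intro hd
        exact hRv (Nat.eq_zero_of_dvd_of_lt (Nat.Coprime.dvd_of_dvd_mul_right hcop hd) R.isLt)
      rw [if_neg hndvd]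
      exact (Matrix.single_apply_of_ne _ _ _ _ _ (by tauto)).trans (by ring)
  rw [key]
  refine AddSubgroup.sum_mem _ fun m _ => AddSubgroup.subset_closure ?_
  have hA : rhoA k ∈ Submonoid.closure {rhoA k, rhoB k} := Submonoid.subset_closure (by simp)
  have hB : rhoB k ∈ Submonoid.closure {rhoA k, rhoB k} := Submonoid.subset_closure (by simp)
  exact SetLike.mem_coe.mpr (mul_mem (pow_mem hB a) (mul_mem (pow_mem hA n)
    (mul_mem (pow_mem hB b) (mul_mem (pow_mem hA (2 * m)) (pow_mem hB (j : ℕ))))))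
end

section
/- The additive subgroup of 2×2 complex matrices generated by the image of ρ_4 (where ρ_4(a)=[[i,0],[0,-i]], ρ_4(b)=[[0,1],[-1,0]]) equals the set of matrices of the form [[x, -conj(y)],[y, conj(x)]] with x, y ∈ ℤ[i]. -/
open FreeGroup Matrix

/-- `ρ₄(a) = [[i,0],[0,-i]]` as a unit of the matrix ring. -/
noncomputable def rho4a : (Matrix (Fin 2) (Fin 2) ℂ)ˣ :=
  ⟨!![Complex.I, 0; 0, -Complex.I], !![-Complex.I, 0; 0, Complex.I],
    by ext i j; fin_cases i <;> fin_cases j <;>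
      simp [Matrix.mul_apply, Fin.sum_univ_two, Matrix.one_apply, Complex.I_mul_I],
    by ext i j; fin_cases i <;> fin_cases j <;>
      simp [Matrix.mul_apply, Fin.sum_univ_two, Matrix.one_apply, Complex.I_mul_I]⟩

/-- `ρ₄(b) = [[0,1],[-1,0]]` as a unit of the matrix ring. -/
noncomputable def rho4b : (Matrix (Fin 2) (Fin 2) ℂ)ˣ :=
  ⟨!![0, 1; -1, 0], !![0, -1; 1, 0],
    by ext i j; fin_cases i <;> fin_cases j <;>
      simp [Matrix.mul_apply, Fin.sum_univ_two, Matrix.one_apply],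
    by ext i j; fin_cases i <;> fin_cases j <;>
      simp [Matrix.mul_apply, Fin.sum_univ_two, Matrix.one_apply]⟩

/-- The representation `ρ₄ : F₂ → GL(2,ℂ)`. -/
noncomputable def rho4 : FreeGroup (Fin 2) →* (Matrix (Fin 2) (Fin 2) ℂ)ˣ :=
  FreeGroup.lift ![rho4a, rho4b]

/-- Auxiliary: the matrix `[[x, -conj y],[y, conj x]]`. -/
noncomputable def quatF (x y : GaussianInt) : Matrix (Fin 2) (Fin 2) ℂ :=
  !![GaussianInt.toComplex x, -(starRingEnd ℂ) (GaussianInt.toComplex y);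
     GaussianInt.toComplex y, (starRingEnd ℂ) (GaussianInt.toComplex x)]

lemma quatF_mul (x1 y1 x2 y2 : GaussianInt) :
    quatF x1 y1 * quatF x2 y2 = quatF (x1*x2 - star y1 * y2) (y1*x2 + star x1 * y2) := by
  ext i j
  fin_cases i <;> fin_cases j <;>
    simp [quatF, Matrix.mul_apply, Fin.sum_univ_two, map_mul, map_add, map_sub,
      GaussianInt.toComplex_star] <;> ring

lemma quatF_add (x1 y1 x2 y2 : GaussianInt) :
    quatF x1 y1 + quatF x2 y2 = quatF (x1+x2) (y1+y2) := by
  ext i j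
  fin_cases i <;> fin_cases j <;> simp [quatF, map_add] <;> ring

lemma quatF_zsmul (n : ℤ) (x y : GaussianInt) :
    n • quatF x y = quatF (n • x) (n • y) := by
  ext i j
  fin_cases i <;> fin_cases j <;>
    simp [quatF, zsmul_eq_mul, map_mul, map_intCast] <;> ring

lemma quatF_one : (1 : Matrix (Fin 2) (Fin 2) ℂ) = quatF 1 0 := by
  ext i j
  fin_cases i <;> fin_cases j <;> simp [quatF, Matrix.one_apply]

lemma coe_rho4a : (rho4a : Matrix (Fin 2) (Fin 2) ℂ) = quatF ⟨0, 1⟩ 0 := by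
  ext i j
  fin_cases i <;> fin_cases j <;>
    simp [rho4a, quatF, GaussianInt.toComplex_def']

lemma coe_rho4b : (rho4b : Matrix (Fin 2) (Fin 2) ℂ) = quatF 0 ⟨-1, 0⟩ := by
  ext i j
  fin_cases i <;> fin_cases j <;>
    simp [rho4b, quatF, GaussianInt.toComplex_def']

lemma coe_rho4a_inv : ((rho4a⁻¹ : _ˣ) : Matrix (Fin 2) (Fin 2) ℂ) = quatF ⟨0, -1⟩ 0 := by
  ext i j
  fin_cases i <;> fin_cases j <;>
    simp [rho4a, quatF, GaussianInt.toComplex_def']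

lemma coe_rho4b_inv : ((rho4b⁻¹ : _ˣ) : Matrix (Fin 2) (Fin 2) ℂ) = quatF 0 ⟨1, 0⟩ := by
  ext i j
  fin_cases i <;> fin_cases j <;>
    simp [rho4b, quatF, GaussianInt.toComplex_def']

/-- every element of the range (and its inverse) has the quaternion form -/
lemma mem_range_form (u : (Matrix (Fin 2) (Fin 2) ℂ)ˣ) (hu : u ∈ rho4.range) :
    (∃ x y, (u : Matrix (Fin 2) (Fin 2) ℂ) = quatF x y) ∧
    (∃ x y, ((u⁻¹ : _ˣ) : Matrix (Fin 2) (Fin 2) ℂ) = quatF x y) := by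
  rw [rho4, FreeGroup.range_lift_eq_closure] at hu
  induction hu using Subgroup.closure_induction with
  | mem v hv =>
      obtain ⟨i, rfl⟩ := hv
      fin_cases i
      · exact ⟨⟨_, _, coe_rho4a⟩, ⟨_, _, coe_rho4a_inv⟩⟩
      · exact ⟨⟨_, _, coe_rho4b⟩, ⟨_, _, coe_rho4b_inv⟩⟩
  | one => exact ⟨⟨1, 0, by simp [quatF_one]⟩, ⟨1, 0, by simp [quatF_one]⟩⟩
  | mul u v _ _ hu hv =>
      obtain ⟨⟨x1, y1, h1⟩, ⟨x1', y1', h1'⟩⟩ := hu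
      obtain ⟨⟨x2, y2, h2⟩, ⟨x2', y2', h2'⟩⟩ := hv
      exact ⟨⟨_, _, by rw [Units.val_mul, h1, h2, quatF_mul]⟩,
        ⟨_, _, by rw [_root_.mul_inv_rev, Units.val_mul, h2', h1', quatF_mul]⟩⟩
  | inv u _ hu => exact ⟨hu.2, by simpa using hu.1⟩

/-- The additive subgroup of 2×2 complex matrices generated by the image of `ρ₄`
equals the set of matrices `[[x, -conj y],[y, conj x]]` with `x, y ∈ ℤ[i]`. -/
theorem stmt_16 :
    (AddSubgroup.closure ((fun u : (Matrix (Fin 2) (Fin 2) ℂ)ˣ => (u : Matrix (Fin 2) (Fin 2) ℂ)) ''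
        (rho4.range : Set (Matrix (Fin 2) (Fin 2) ℂ)ˣ)) : Set (Matrix (Fin 2) (Fin 2) ℂ)) =
      {M | ∃ x y : GaussianInt,
        M = !![GaussianInt.toComplex x, -(starRingEnd ℂ) (GaussianInt.toComplex y);
               GaussianInt.toComplex y, (starRingEnd ℂ) (GaussianInt.toComplex x)]} := by
  have hset : {M : Matrix (Fin 2) (Fin 2) ℂ | ∃ x y : GaussianInt,
        M = !![GaussianInt.toComplex x, -(starRingEnd ℂ) (GaussianInt.toComplex y);
               GaussianInt.toComplex y, (starRingEnd ℂ) (GaussianInt.toComplex x)]} =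
      {M | ∃ x y : GaussianInt, M = quatF x y} := rfl
  rw [hset]
  apply Set.eq_of_subset_of_subset
  · -- closure ≤ S; S as an AddSubgroup
    let S : AddSubgroup (Matrix (Fin 2) (Fin 2) ℂ) :=
      { carrier := {M | ∃ x y : GaussianInt, M = quatF x y}
        zero_mem' := ⟨0, 0, by ext i j; fin_cases i <;> fin_cases j <;> simp [quatF]⟩
        add_mem' := by
          rintro _ _ ⟨x1, y1, rfl⟩ ⟨x2, y2, rfl⟩
          exact ⟨_, _, (quatF_add x1 y1 x2 y2)⟩
        neg_mem' := by
          rintro _ ⟨x, y, rfl⟩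
          exact ⟨-x, -y, by rw [← neg_one_zsmul, quatF_zsmul]; simp⟩ }
    have : AddSubgroup.closure ((fun u : (Matrix (Fin 2) (Fin 2) ℂ)ˣ =>
        (u : Matrix (Fin 2) (Fin 2) ℂ)) '' (rho4.range : Set _)) ≤ S := by
      rw [AddSubgroup.closure_le]
      rintro _ ⟨u, hu, rfl⟩
      exact (mem_range_form u hu).1
    exact this
  · rintro _ ⟨x, y, rfl⟩
    have hmem : ∀ g : FreeGroup (Fin 2), ((rho4 g : _ˣ) : Matrix (Fin 2) (Fin 2) ℂ) ∈
        AddSubgroup.closure ((fun u : (Matrix (Fin 2) (Fin 2) ℂ)ˣ =>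
          (u : Matrix (Fin 2) (Fin 2) ℂ)) '' (rho4.range : Set _)) := fun g =>
      AddSubgroup.subset_closure ⟨rho4 g, ⟨g, rfl⟩, rfl⟩
    have h1 : quatF 1 0 = ((rho4 1 : _ˣ) : Matrix (Fin 2) (Fin 2) ℂ) := by
      simp [← quatF_one]
    have ha : quatF ⟨0, 1⟩ 0 = ((rho4 (FreeGroup.of 0) : _ˣ) : Matrix (Fin 2) (Fin 2) ℂ) := by
      rw [rho4, FreeGroup.lift_apply_of]; exact coe_rho4a.symm
    have hb : quatF 0 ⟨-1, 0⟩ = ((rho4 (FreeGroup.of 1) : _ˣ) : Matrix (Fin 2) (Fin 2) ℂ) := by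
      rw [rho4, FreeGroup.lift_apply_of]; exact coe_rho4b.symm
    have hab : quatF 0 ⟨0, 1⟩ =
        ((rho4 (FreeGroup.of 0 * FreeGroup.of 1) : _ˣ) : Matrix (Fin 2) (Fin 2) ℂ) := by
      rw [MonoidHom.map_mul, Units.val_mul, ← ha, ← hb, quatF_mul]
      congr 1 <;> ext <;> simp [Zsqrtd.re_mul, Zsqrtd.im_mul, Zsqrtd.re_star, Zsqrtd.im_star]
    have key : quatF x y = x.re • quatF 1 0 + x.im • quatF ⟨0, 1⟩ 0 +
        (-y.re) • quatF 0 ⟨-1, 0⟩ + y.im • quatF 0 ⟨0, 1⟩ := by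
      have hx2 : x.re • (1 : GaussianInt) + x.im • (⟨0, 1⟩ : GaussianInt) +
          (-y.re) • (0 : GaussianInt) + y.im • (0 : GaussianInt) = x := by
        ext <;> simp [zsmul_eq_mul, Zsqrtd.re_smul, Zsqrtd.im_smul]
      have hy2 : x.re • (0 : GaussianInt) + x.im • (0 : GaussianInt) +
          (-y.re) • (⟨-1, 0⟩ : GaussianInt) + y.im • (⟨0, 1⟩ : GaussianInt) = y := by
        ext <;> simp [zsmul_eq_mul, Zsqrtd.re_smul, Zsqrtd.im_smul]
      rw [quatF_zsmul, quatF_zsmul, quatF_zsmul, quatF_zsmul, quatF_add, quatF_add, quatF_add,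
        hx2, hy2]
    rw [key, h1, ha, hb, hab]
    exact AddSubgroup.add_mem _ (AddSubgroup.add_mem _ (AddSubgroup.add_mem _
      (AddSubgroup.zsmul_mem _ (hmem _) _) (AddSubgroup.zsmul_mem _ (hmem _) _))
      (AddSubgroup.zsmul_mem _ (hmem _) _)) (AddSubgroup.zsmul_mem _ (hmem _) _)
end
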